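/- Let P̃₀ ≠ P̃₁ be probability measures, and let Λ be the set of quadruples (π₀, π₁, P₀, P₁) with π₀, π₁ ≥ 0, π₀ + π₁ < 1, P₀, P₁ probability measures, P̃₀ = (1-π₀)P₀ + π₀P₁, and P̃₁ = (1-π₁)P₁ + π₁P₀. Then there exists a unique element (π₀*, π₁*, P₀*, P₁*) of Λ such that P₀* and P₁* are mutually irreducible; moreover, with π̃₀* = ν*(P̃₀, P̃₁) and π̃₁* = ν*(P̃₁, P̃₀), one has π₀* = π̃₀*(1-π̃₁*)/(1-π̃₀*π̃₁*) and π₁* = π̃₁*(1-π̃₀*)/(1-π̃₀*π̃₁*). -/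

import Mathlib

set_option maxHeartbeats 1000000


open MeasureTheory

/-- The mixture `(1-a)·P + a·Q` of two measures. -/
noncomputable def mix {X : Type*} [MeasurableSpace X] (a : ℝ) (P Q : Measure X) :
    Measure X :=
  ENNReal.ofReal (1 - a) • P + ENNReal.ofReal a • Q

/-- `G` is irreducible with respect to `H`: no decomposition `G = γ·H + (1-γ)·F'`
with `F'` a probability measure and `0 < γ ≤ 1`. -/
def Irred {X : Type*} [MeasurableSpace X] (G H : Measure X) : Prop :=
  ¬ ∃ (γ : ℝ) (F' : Measure X), IsProbabilityMeasure F' ∧ 0 < γ ∧ γ ≤ 1 ∧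
      G = mix γ F' H

/-- Mutual irreducibility. -/
def MutIrred {X : Type*} [MeasurableSpace X] (P Q : Measure X) : Prop :=
  Irred P Q ∧ Irred Q P

/-- The set of feasible mixture proportions of `H` in `F`. -/
def nuSet {X : Type*} [MeasurableSpace X] (F H : Measure X) : Set ℝ :=
  {α | α ∈ Set.Icc (0:ℝ) 1 ∧
    ∃ G' : Measure X, IsProbabilityMeasure G' ∧ F = mix α G' H}

/-- `ν*(F,H)`: the maximal proportion of `H` in `F`. -/
noncomputable def nuStar {X : Type*} [MeasurableSpace X] (F H : Measure X) : ℝ :=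
  sSup (nuSet F H)

/-- Feasible quadruples `(π₀, π₁, P₀, P₁)` for the contamination model with observed
contaminated distributions `Pt₀, Pt₁`. -/
def Feas {X : Type*} [MeasurableSpace X] (Pt₀ Pt₁ : Measure X)
    (q : ℝ × ℝ × Measure X × Measure X) : Prop :=
  0 ≤ q.1 ∧ 0 ≤ q.2.1 ∧ q.1 + q.2.1 < 1 ∧
  IsProbabilityMeasure q.2.2.1 ∧ IsProbabilityMeasure q.2.2.2 ∧
  Pt₀ = mix q.1 q.2.2.1 q.2.2.2 ∧ Pt₁ = mix q.2.1 q.2.2.2 q.2.2.1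

section Helpers

variable {X : Type*} [MeasurableSpace X]

lemma mix_apply (a : ℝ) (P Q : Measure X) (s : Set X) :
    mix a P Q s = ENNReal.ofReal (1 - a) * P s + ENNReal.ofReal a * Q s := by
  simp [mix, Measure.add_apply, Measure.smul_apply, smul_eq_mul]

lemma prob_eq_of_le (μ ν : Measure X)
    [IsProbabilityMeasure μ] [IsProbabilityMeasure ν] (h : μ ≤ ν) : μ = ν := by
  ext s hs
  have h1 : μ s ≤ ν s := h s
  have h2 : μ sᶜ ≤ ν sᶜ := h sᶜ
  have hμ : μ s + μ sᶜ = 1 := by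
    rw [measure_add_measure_compl hs, measure_univ]
  have hν : ν s + ν sᶜ = 1 := by
    rw [measure_add_measure_compl hs, measure_univ]
  by_contra hne
  have hlt : μ s < ν s := lt_of_le_of_ne h1 hne
  have : μ s + μ sᶜ < ν s + ν sᶜ := ENNReal.add_lt_add_of_lt_of_le
    (by simp) hlt h2
  rw [hμ, hν] at this
  exact lt_irrefl _ this

lemma smul_le_iff (c : ℝ) (hc : 0 ≤ c) (μ ν : Measure X) [IsFiniteMeasure μ]
    [IsFiniteMeasure ν] :
    (ENNReal.ofReal c • μ ≤ ν) ↔ ∀ s, MeasurableSet s → c * (μ s).toReal ≤ (ν s).toReal := by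
  rw [Measure.le_iff]
  refine forall₂_congr fun s hs => ?_
  rw [Measure.smul_apply, smul_eq_mul,
    show ENNReal.ofReal c * μ s = ENNReal.ofReal (c * (μ s).toReal) from by
      rw [ENNReal.ofReal_mul hc, ENNReal.ofReal_toReal (measure_ne_top μ s)]]
  exact ENNReal.ofReal_le_iff_le_toReal (measure_ne_top ν s)

lemma eq_mix_iff (a : ℝ) (ha : 0 ≤ a) (ha1 : a ≤ 1) (F P Q : Measure X)
    [IsFiniteMeasure F] [IsFiniteMeasure P] [IsFiniteMeasure Q] :
    F = mix a P Q ↔ ∀ s, MeasurableSet s →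
      (F s).toReal = (1 - a) * (P s).toReal + a * (Q s).toReal := by
  constructor
  · intro h s hs
    rw [h, mix_apply, ENNReal.toReal_add (by finiteness) (by finiteness),
      ENNReal.toReal_mul, ENNReal.toReal_mul, ENNReal.toReal_ofReal (by linarith),
      ENNReal.toReal_ofReal ha]
  · intro h
    ext s hs
    rw [mix_apply, ← ENNReal.ofReal_toReal (measure_ne_top F s),
      ← ENNReal.ofReal_toReal (measure_ne_top P s),
      ← ENNReal.ofReal_toReal (measure_ne_top Q s),
      ← ENNReal.ofReal_mul (by linarith), ← ENNReal.ofReal_mul ha,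
      ← ENNReal.ofReal_add (mul_nonneg (by linarith) ENNReal.toReal_nonneg)
        (mul_nonneg ha ENNReal.toReal_nonneg)]
    exact congrArg _ (h s hs)

lemma mem_nuSet_iff (F H : Measure X) [IsProbabilityMeasure F] [IsProbabilityMeasure H]
    (α : ℝ) : α ∈ nuSet F H ↔ 0 ≤ α ∧ α ≤ 1 ∧ ENNReal.ofReal α • H ≤ F := by
  constructor
  · rintro ⟨⟨h0, h1⟩, G', hG', hFeq⟩
    refine ⟨h0, h1, ?_⟩
    rw [Measure.le_iff]
    intro s hs
    rw [hFeq, mix_apply, Measure.smul_apply, smul_eq_mul]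
    exact le_add_self
  · rintro ⟨h0, h1, hle⟩
    rcases lt_or_eq_of_le h1 with h1' | h1'
    · have hne : ENNReal.ofReal (1 - α) ≠ 0 := by
        simp only [ne_eq, ENNReal.ofReal_eq_zero, not_le]; linarith
      have hnt : ENNReal.ofReal (1 - α) ≠ ⊤ := ENNReal.ofReal_ne_top
      set ν : Measure X := ENNReal.ofReal α • H with hν
      have hνfin : IsFiniteMeasure ν := by
        constructor
        rw [hν, Measure.smul_apply, smul_eq_mul]
        exact ENNReal.mul_lt_top ENNReal.ofReal_lt_top (measure_lt_top H _)
      have hsub : F - ν + ν = F := Measure.sub_add_cancel_of_le hle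
      set G' : Measure X := (ENNReal.ofReal (1 - α))⁻¹ • (F - ν) with hG'
      have hsubuniv : (F - ν) Set.univ = ENNReal.ofReal (1 - α) := by
        rw [Measure.sub_apply MeasurableSet.univ hle]
        simp only [measure_univ, hν, Measure.smul_apply, smul_eq_mul, mul_one]
        rw [ENNReal.ofReal_sub _ h0]
        simp
      have hG'prob : IsProbabilityMeasure G' := by
        constructor
        rw [hG', Measure.smul_apply, smul_eq_mul, hsubuniv]
        exact ENNReal.inv_mul_cancel hne hnt
      refine ⟨⟨h0, h1⟩, G', hG'prob, ?_⟩
      have hres : ENNReal.ofReal (1 - α) • G' = F - ν := by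
        rw [hG', smul_smul, ENNReal.mul_inv_cancel hne hnt, one_smul]
      rw [mix, hres, hsub]
    · subst h1'
      have hHF : H = F := by
        have : H ≤ F := by simpa using hle
        exact prob_eq_of_le H F this
      refine ⟨⟨h0, le_refl _⟩, H, inferInstance, ?_⟩
      rw [mix]
      simp [← hHF]

lemma zero_mem_nuSet (F H : Measure X) [IsProbabilityMeasure F] :
    (0:ℝ) ∈ nuSet F H := by
  refine ⟨⟨le_refl _, zero_le_one⟩, F, inferInstance, ?_⟩
  simp [mix]

lemma nuSet_bddAbove (F H : Measure X) : BddAbove (nuSet F H) :=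
  ⟨1, fun _ hx => hx.1.2⟩

lemma nuStar_mem (F H : Measure X) [IsProbabilityMeasure F] [IsProbabilityMeasure H] :
    nuStar F H ∈ nuSet F H := by
  have hne : (nuSet F H).Nonempty := ⟨0, zero_mem_nuSet F H⟩
  have hbdd := nuSet_bddAbove F H
  have h0 : 0 ≤ nuStar F H := le_csSup hbdd (zero_mem_nuSet F H)
  have h1 : nuStar F H ≤ 1 := csSup_le hne fun x hx => hx.1.2
  rw [mem_nuSet_iff]
  refine ⟨h0, h1, ?_⟩
  rw [smul_le_iff _ h0]
  intro s hs
  by_contra hcon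
  push_neg at hcon
  have hb : 0 < (H s).toReal := by
    rcases le_or_gt (H s).toReal 0 with h | h
    · nlinarith [ENNReal.toReal_nonneg (a := F s)]
    · exact h
  have hlt : (F s).toReal / (H s).toReal < nuStar F H := by
    rw [div_lt_iff₀ hb]; nlinarith
  obtain ⟨α, hα, hα2⟩ := exists_lt_of_lt_csSup hne hlt
  have := ((smul_le_iff α hα.1.1 H F).mp ((mem_nuSet_iff F H α).mp hα).2.2) s hs
  rw [div_lt_iff₀ hb] at hα2
  nlinarith

lemma le_nuStar {F H : Measure X} {α : ℝ} (h : α ∈ nuSet F H) : α ≤ nuStar F H :=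
  le_csSup (nuSet_bddAbove F H) h

lemma nuStar_lt_one (F H : Measure X) [IsProbabilityMeasure F] [IsProbabilityMeasure H]
    (hne : F ≠ H) : nuStar F H < 1 := by
  have hm := (mem_nuSet_iff F H _).mp (nuStar_mem F H)
  rcases lt_or_eq_of_le hm.2.1 with h | h
  · exact h
  · exfalso
    apply hne
    have : H ≤ F := by
      have := hm.2.2; rw [h] at this; simpa using this
    exact (prob_eq_of_le H F this).symm

lemma irred_iff (G H : Measure X) [IsProbabilityMeasure G] [IsProbabilityMeasure H] :
    Irred G H ↔ ∀ γ : ℝ, 0 < γ → ¬ (ENNReal.ofReal γ • H ≤ G) := by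
  constructor
  · intro hI γ hγ hle
    set c := min γ 1 with hc
    have hc0 : 0 < c := lt_min hγ one_pos
    have hc1 : c ≤ 1 := min_le_right _ _
    have hcle : ENNReal.ofReal c • H ≤ G := by
      refine le_trans ?_ hle
      intro s
      simp only [Measure.smul_apply, smul_eq_mul]
      exact mul_le_mul_left (ENNReal.ofReal_le_ofReal (min_le_left _ _)) _
    have hmem : c ∈ nuSet G H := (mem_nuSet_iff G H c).mpr ⟨hc0.le, hc1, hcle⟩
    obtain ⟨_, G', hG', hGeq⟩ := hmem
    exact hI ⟨c, G', hG', hc0, hc1, hGeq⟩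
  · rintro h ⟨γ, F', hF', hγ0, hγ1, hGeq⟩
    have hmem : γ ∈ nuSet G H := ⟨⟨hγ0.le, hγ1⟩, F', hF', hGeq⟩
    exact h γ hγ0 ((mem_nuSet_iff G H γ).mp hmem).2.2

end Helpers

theorem unique_mutually_irreducible_solution {X : Type*} [MeasurableSpace X]
    (Pt₀ Pt₁ : Measure X) [IsProbabilityMeasure Pt₀] [IsProbabilityMeasure Pt₁]
    (hne : Pt₀ ≠ Pt₁) :
    (∃! q : ℝ × ℝ × Measure X × Measure X,
        Feas Pt₀ Pt₁ q ∧ MutIrred q.2.2.1 q.2.2.2) ∧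
    ∀ q : ℝ × ℝ × Measure X × Measure X,
      Feas Pt₀ Pt₁ q → MutIrred q.2.2.1 q.2.2.2 →
      q.1 = nuStar Pt₀ Pt₁ * (1 - nuStar Pt₁ Pt₀) /
              (1 - nuStar Pt₀ Pt₁ * nuStar Pt₁ Pt₀) ∧
      q.2.1 = nuStar Pt₁ Pt₀ * (1 - nuStar Pt₀ Pt₁) /
              (1 - nuStar Pt₀ Pt₁ * nuStar Pt₁ Pt₀) := by
  classical
  set ν₀ := nuStar Pt₀ Pt₁ with hν₀def
  set ν₁ := nuStar Pt₁ Pt₀ with hν₁def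
  obtain ⟨⟨hν₀0, hν₀le1⟩, P₀, hP₀prob, hPt₀⟩ := nuStar_mem Pt₀ Pt₁
  obtain ⟨⟨hν₁0, hν₁le1⟩, P₁, hP₁prob, hPt₁⟩ := nuStar_mem Pt₁ Pt₀
  rw [← hν₀def] at hν₀0 hν₀le1 hPt₀
  rw [← hν₁def] at hν₁0 hν₁le1 hPt₁
  have hν₀1 : ν₀ < 1 := nuStar_lt_one Pt₀ Pt₁ hne
  have hν₁1 : ν₁ < 1 := nuStar_lt_one Pt₁ Pt₀ (Ne.symm hne)
  have hD : 0 < 1 - ν₀ * ν₁ := by nlinarith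
  set π₀ := ν₀ * (1 - ν₁) / (1 - ν₀ * ν₁) with hπ₀def
  set π₁ := ν₁ * (1 - ν₀) / (1 - ν₀ * ν₁) with hπ₁def
  have hπ₀0 : 0 ≤ π₀ := div_nonneg (mul_nonneg hν₀0 (by linarith)) hD.le
  have hπ₁0 : 0 ≤ π₁ := div_nonneg (mul_nonneg hν₁0 (by linarith)) hD.le
  have hsum : π₀ + π₁ < 1 := by
    rw [hπ₀def, hπ₁def, ← add_div, div_lt_one hD]; nlinarith
  have hπ₀1 : π₀ ≤ 1 := by linarith
  have hπ₁1 : π₁ ≤ 1 := by linarith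
  have key₀ : ∀ s, MeasurableSet s →
      (Pt₀ s).toReal = (1 - ν₀) * (P₀ s).toReal + ν₀ * (Pt₁ s).toReal :=
    (eq_mix_iff ν₀ hν₀0 hν₀le1 Pt₀ P₀ Pt₁).mp hPt₀
  have key₁ : ∀ s, MeasurableSet s →
      (Pt₁ s).toReal = (1 - ν₁) * (P₁ s).toReal + ν₁ * (Pt₀ s).toReal :=
    (eq_mix_iff ν₁ hν₁0 hν₁le1 Pt₁ P₁ Pt₀).mp hPt₁
  have hmix₀ : Pt₀ = mix π₀ P₀ P₁ := by
    rw [eq_mix_iff π₀ hπ₀0 hπ₀1]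
    intro s hs
    have h0 := key₀ s hs
    have h1 := key₁ s hs
    have hDa : (Pt₀ s).toReal * (1 - ν₀ * ν₁)
        = (1 - ν₀) * (P₀ s).toReal + ν₀ * (1 - ν₁) * (P₁ s).toReal := by
      linear_combination h0 + ν₀ * h1
    rw [hπ₀def]
    field_simp
    linear_combination hDa
  have hmix₁ : Pt₁ = mix π₁ P₁ P₀ := by
    rw [eq_mix_iff π₁ hπ₁0 hπ₁1]
    intro s hs
    have h0 := key₀ s hs
    have h1 := key₁ s hs
    have hDb : (Pt₁ s).toReal * (1 - ν₀ * ν₁)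
        = (1 - ν₁) * (P₁ s).toReal + ν₁ * (1 - ν₀) * (P₀ s).toReal := by
      linear_combination h1 + ν₁ * h0
    rw [hπ₁def]
    have hD' : 1 - ν₁ * ν₀ ≠ 0 := by rw [mul_comm]; exact hD.ne'
    field_simp
    linear_combination hDb
  have hfeas : Feas Pt₀ Pt₁ (π₀, π₁, P₀, P₁) :=
    ⟨hπ₀0, hπ₁0, hsum, hP₀prob, hP₁prob, hmix₀, hmix₁⟩
  -- Step A: the residual measures are irreducible w.r.t. the contaminated measures.
  have hA₀ : ∀ c : ℝ, 0 < c → ¬ (ENNReal.ofReal c • Pt₁ ≤ P₀) := by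
    intro c hc hle
    have hle' := (smul_le_iff c hc.le Pt₁ P₀).mp hle
    set β := min (ν₀ + (1 - ν₀) * c) 1 with hβ
    have hβ0 : 0 ≤ β := le_min (by nlinarith) zero_le_one
    have hβmem : β ∈ nuSet Pt₀ Pt₁ := by
      rw [mem_nuSet_iff]
      refine ⟨hβ0, min_le_right _ _, ?_⟩
      rw [smul_le_iff _ hβ0]
      intro s hs
      have h0 := key₀ s hs
      have hcb := hle' s hs
      have hβle : β ≤ ν₀ + (1 - ν₀) * c := min_le_left _ _
      nlinarith [ENNReal.toReal_nonneg (a := Pt₁ s), ENNReal.toReal_nonneg (a := P₀ s)]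
    have h1 : β ≤ ν₀ := le_nuStar hβmem
    have h2 : ν₀ < β := lt_min (by nlinarith) hν₀1
    linarith
  have hA₁ : ∀ c : ℝ, 0 < c → ¬ (ENNReal.ofReal c • Pt₀ ≤ P₁) := by
    intro c hc hle
    have hle' := (smul_le_iff c hc.le Pt₀ P₁).mp hle
    set β := min (ν₁ + (1 - ν₁) * c) 1 with hβ
    have hβ0 : 0 ≤ β := le_min (by nlinarith) zero_le_one
    have hβmem : β ∈ nuSet Pt₁ Pt₀ := by
      rw [mem_nuSet_iff]
      refine ⟨hβ0, min_le_right _ _, ?_⟩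
      rw [smul_le_iff _ hβ0]
      intro s hs
      have h1 := key₁ s hs
      have hcb := hle' s hs
      have hβle : β ≤ ν₁ + (1 - ν₁) * c := min_le_left _ _
      nlinarith [ENNReal.toReal_nonneg (a := Pt₀ s), ENNReal.toReal_nonneg (a := P₁ s)]
    have h1 : β ≤ ν₁ := le_nuStar hβmem
    have h2 : ν₁ < β := lt_min (by nlinarith) hν₁1
    linarith
  have hI₀ : Irred P₀ P₁ := by
    rw [irred_iff]
    intro γ hγ hle
    have hle' := (smul_le_iff γ hγ.le P₁ P₀).mp hle
    have hden : 0 < (1 - ν₁) + γ * ν₁ * (1 - ν₀) := by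
      have := mul_nonneg (mul_nonneg hγ.le hν₁0) (by linarith : (0:ℝ) ≤ 1 - ν₀)
      linarith
    have hδ0 : 0 < γ * (1 - ν₀ * ν₁) / ((1 - ν₁) + γ * ν₁ * (1 - ν₀)) :=
      div_pos (by nlinarith) hden
    refine hA₀ _ hδ0 ?_
    rw [smul_le_iff _ hδ0.le]
    intro s hs
    have h0 := key₀ s hs
    have h1 := key₁ s hs
    have hq := hle' s hs
    have hDb : (1 - ν₀ * ν₁) * (Pt₁ s).toReal
        = (1 - ν₁) * (P₁ s).toReal + ν₁ * (1 - ν₀) * (P₀ s).toReal := by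
      linear_combination h1 + ν₁ * h0
    rw [div_mul_eq_mul_div, div_le_iff₀ hden]
    nlinarith [ENNReal.toReal_nonneg (a := P₀ s), ENNReal.toReal_nonneg (a := P₁ s),
      mul_le_mul_of_nonneg_left hq (by linarith : (0:ℝ) ≤ 1 - ν₁)]
  have hI₁ : Irred P₁ P₀ := by
    rw [irred_iff]
    intro γ hγ hle
    have hle' := (smul_le_iff γ hγ.le P₀ P₁).mp hle
    have hden : 0 < (1 - ν₀) + γ * ν₀ * (1 - ν₁) := by
      have := mul_nonneg (mul_nonneg hγ.le hν₀0) (by linarith : (0:ℝ) ≤ 1 - ν₁)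
      linarith
    have hδ0 : 0 < γ * (1 - ν₀ * ν₁) / ((1 - ν₀) + γ * ν₀ * (1 - ν₁)) :=
      div_pos (by nlinarith) hden
    refine hA₁ _ hδ0 ?_
    rw [smul_le_iff _ hδ0.le]
    intro s hs
    have h0 := key₀ s hs
    have h1 := key₁ s hs
    have hq := hle' s hs
    have hDa : (1 - ν₀ * ν₁) * (Pt₀ s).toReal
        = (1 - ν₀) * (P₀ s).toReal + ν₀ * (1 - ν₁) * (P₁ s).toReal := by
      linear_combination h0 + ν₀ * h1
    rw [div_mul_eq_mul_div, div_le_iff₀ hden]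
    nlinarith [ENNReal.toReal_nonneg (a := P₀ s), ENNReal.toReal_nonneg (a := P₁ s),
      mul_le_mul_of_nonneg_left hq (by linarith : (0:ℝ) ≤ 1 - ν₀)]
  -- Main uniqueness claim
  have main : ∀ q : ℝ × ℝ × Measure X × Measure X, Feas Pt₀ Pt₁ q →
      MutIrred q.2.2.1 q.2.2.2 → q = (π₀, π₁, P₀, P₁) := by
    rintro ⟨t₀, t₁, Q₀, Q₁⟩ ⟨ht₀0, ht₁0, htsum, hQ₀, hQ₁, hmeq₀, hmeq₁⟩ ⟨hIrr₀, hIrr₁⟩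
    simp only at ht₀0 ht₁0 htsum hQ₀ hQ₁ hmeq₀ hmeq₁ hIrr₀ hIrr₁
    haveI := hQ₀
    haveI := hQ₁
    have ht₀1 : t₀ ≤ 1 := by linarith
    have ht₁1 : t₁ ≤ 1 := by linarith
    have h1t₁ : 0 < 1 - t₁ := by linarith
    have h1t₀ : 0 < 1 - t₀ := by linarith
    have k₀ := (eq_mix_iff t₀ ht₀0 ht₀1 Pt₀ Q₀ Q₁).mp hmeq₀
    have k₁ := (eq_mix_iff t₁ ht₁0 ht₁1 Pt₁ Q₁ Q₀).mp hmeq₁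
    -- ν₀ = t₀ / (1 - t₁)
    have hα₀mem : t₀ / (1 - t₁) ∈ nuSet Pt₀ Pt₁ := by
      rw [mem_nuSet_iff]
      refine ⟨div_nonneg ht₀0 h1t₁.le, by rw [div_le_one h1t₁]; linarith, ?_⟩
      rw [smul_le_iff _ (div_nonneg ht₀0 h1t₁.le)]
      intro s hs
      have a0 := k₀ s hs
      have b0 := k₁ s hs
      rw [div_mul_eq_mul_div, div_le_iff₀ h1t₁]
      nlinarith [ENNReal.toReal_nonneg (a := Q₀ s), ENNReal.toReal_nonneg (a := Q₁ s)]
    have hν₀ge : t₀ / (1 - t₁) ≤ ν₀ := le_nuStar hα₀mem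
    have hν₀le : ν₀ ≤ t₀ / (1 - t₁) := by
      by_contra hcon
      push_neg at hcon
      have hbig := (smul_le_iff ν₀ hν₀0 Pt₁ Pt₀).mp
        ((mem_nuSet_iff Pt₀ Pt₁ ν₀).mp (by rw [hν₀def]; exact nuStar_mem Pt₀ Pt₁)).2.2
      have hnum : 0 < ν₀ * (1 - t₁) - t₀ := by
        have := (div_lt_iff₀ h1t₁).mp hcon
        linarith
      have hden2 : 0 < 1 - t₀ - ν₀ * t₁ := by nlinarith
      refine (irred_iff Q₀ Q₁).mp hIrr₀ ((ν₀ * (1 - t₁) - t₀) / (1 - t₀ - ν₀ * t₁))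
        (div_pos hnum hden2) ?_
      rw [smul_le_iff _ (div_pos hnum hden2).le]
      intro s hs
      have a0 := k₀ s hs
      have b0 := k₁ s hs
      have hb := hbig s hs
      rw [div_mul_eq_mul_div, div_le_iff₀ hden2]
      nlinarith [hb]
    have hα₀ : ν₀ * (1 - t₁) = t₀ := by
      have : ν₀ = t₀ / (1 - t₁) := le_antisymm hν₀le hν₀ge
      rw [this]
      field_simp
    -- ν₁ = t₁ / (1 - t₀)
    have hα₁mem : t₁ / (1 - t₀) ∈ nuSet Pt₁ Pt₀ := by
      rw [mem_nuSet_iff]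
      refine ⟨div_nonneg ht₁0 h1t₀.le, by rw [div_le_one h1t₀]; linarith, ?_⟩
      rw [smul_le_iff _ (div_nonneg ht₁0 h1t₀.le)]
      intro s hs
      have a0 := k₀ s hs
      have b0 := k₁ s hs
      rw [div_mul_eq_mul_div, div_le_iff₀ h1t₀]
      nlinarith [ENNReal.toReal_nonneg (a := Q₀ s), ENNReal.toReal_nonneg (a := Q₁ s)]
    have hν₁ge : t₁ / (1 - t₀) ≤ ν₁ := le_nuStar hα₁mem
    have hν₁le : ν₁ ≤ t₁ / (1 - t₀) := by
      by_contra hcon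
      push_neg at hcon
      have hbig := (smul_le_iff ν₁ hν₁0 Pt₀ Pt₁).mp
        ((mem_nuSet_iff Pt₁ Pt₀ ν₁).mp (by rw [hν₁def]; exact nuStar_mem Pt₁ Pt₀)).2.2
      have hnum : 0 < ν₁ * (1 - t₀) - t₁ := by
        have := (div_lt_iff₀ h1t₀).mp hcon
        linarith
      have hden2 : 0 < 1 - t₁ - ν₁ * t₀ := by nlinarith
      refine (irred_iff Q₁ Q₀).mp hIrr₁ ((ν₁ * (1 - t₀) - t₁) / (1 - t₁ - ν₁ * t₀))
        (div_pos hnum hden2) ?_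
      rw [smul_le_iff _ (div_pos hnum hden2).le]
      intro s hs
      have a0 := k₀ s hs
      have b0 := k₁ s hs
      have hb := hbig s hs
      rw [div_mul_eq_mul_div, div_le_iff₀ hden2]
      nlinarith [hb]
    have hα₁ : ν₁ * (1 - t₀) = t₁ := by
      have : ν₁ = t₁ / (1 - t₀) := le_antisymm hν₁le hν₁ge
      rw [this]
      field_simp
    -- the mixture proportions agree
    have ht₀eq : t₀ = π₀ := by
      rw [hπ₀def, eq_div_iff hD.ne']
      linear_combination ν₀ * hα₁ - hα₀
    have ht₁eq : t₁ = π₁ := by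
      rw [hπ₁def, eq_div_iff hD.ne']
      linear_combination ν₁ * hα₀ - hα₁
    -- the component measures agree
    have key₀' : ∀ s, MeasurableSet s →
        (Pt₀ s).toReal = (1 - π₀) * (P₀ s).toReal + π₀ * (P₁ s).toReal :=
      (eq_mix_iff π₀ hπ₀0 hπ₀1 Pt₀ P₀ P₁).mp hmix₀
    have key₁' : ∀ s, MeasurableSet s →
        (Pt₁ s).toReal = (1 - π₁) * (P₁ s).toReal + π₁ * (P₀ s).toReal :=
      (eq_mix_iff π₁ hπ₁0 hπ₁1 Pt₁ P₁ P₀).mp hmix₁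
    have hQ₀eq : Q₀ = P₀ := by
      ext s hs
      rw [← ENNReal.ofReal_toReal (measure_ne_top Q₀ s),
        ← ENNReal.ofReal_toReal (measure_ne_top P₀ s)]
      congr 1
      have a0 := k₀ s hs
      have b0 := k₁ s hs
      rw [ht₀eq] at a0
      rw [ht₁eq] at b0
      have h0 := key₀' s hs
      have h1 := key₁' s hs
      have hz : (1 - π₀ - π₁) * ((Q₀ s).toReal - (P₀ s).toReal) = 0 := by
        linear_combination (1 - π₁) * h0 - (1 - π₁) * a0 + π₀ * b0 - π₀ * h1
      rcases mul_eq_zero.mp hz with h | h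
      · linarith
      · linarith [sub_eq_zero.mp h]
    have hQ₁eq : Q₁ = P₁ := by
      ext s hs
      rw [← ENNReal.ofReal_toReal (measure_ne_top Q₁ s),
        ← ENNReal.ofReal_toReal (measure_ne_top P₁ s)]
      congr 1
      have a0 := k₀ s hs
      have b0 := k₁ s hs
      rw [ht₀eq] at a0
      rw [ht₁eq] at b0
      have h0 := key₀' s hs
      have h1 := key₁' s hs
      have hz : (1 - π₀ - π₁) * ((Q₁ s).toReal - (P₁ s).toReal) = 0 := by
        linear_combination π₁ * a0 - π₁ * h0 - (1 - π₀) * b0 + (1 - π₀) * h1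
      rcases mul_eq_zero.mp hz with h | h
      · linarith
      · linarith [sub_eq_zero.mp h]
    rw [ht₀eq, ht₁eq, hQ₀eq, hQ₁eq]
  constructor
  · exact ⟨(π₀, π₁, P₀, P₁), ⟨hfeas, hI₀, hI₁⟩, fun q hq => main q hq.1 hq.2⟩
  · intro q hq hmi
    rw [main q hq hmi]
    exact ⟨hπ₀def ▸ rfl, hπ₁def ▸ rfl⟩
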